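/- Let G be a topological group, Λ ≤ G a subgroup, and ν a Borel probability measure on the quotient space G/Λ that is invariant under the left-translation action of G. Let B be a real Banach space. Assume that for every L' ≥ 1, every representation σ of Λ on B uniformly bounded by L', and every cocycle β for σ, the set {β(λ) : λ ∈ Λ} is bounded. Then for every L ≥ 1, every representation π of G on B uniformly bounded by L, and every cocycle α for π such that the affine action (g,x) ↦ π(g)x + α(g) is continuous as a map G × B → B, the set {α(g) : g ∈ G} is bounded. (That is, if a lattice Λ in G has property (F̄_B) then G has property (F̄_B).) -/

import Mathlib

open MeasureTheory

/-- If `Λ` is a subgroup of a topological group `G` such that the quotient `G/Λ` carries a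
`G`-invariant Borel probability measure, and every uniformly Lipschitz affine action of `Λ`
on a Banach space `B` has bounded orbits, then every continuous uniformly Lipschitz affine
action of `G` on `B` has bounded orbits; that is, if the lattice `Λ` has property `(F̄_B)`
then so does `G`. -/
theorem lattice_FB_implies_ambient_FB {G : Type*} [Group G] [TopologicalSpace G]
    [IsTopologicalGroup G] (Λ : Subgroup G)
    [MeasurableSpace (G ⧸ Λ)] [BorelSpace (G ⧸ Λ)]
    (ν : Measure (G ⧸ Λ)) [IsProbabilityMeasure ν]
    (hν : ∀ g : G, Measure.map (fun x : G ⧸ Λ => g • x) ν = ν)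
    {B : Type*} [NormedAddCommGroup B] [NormedSpace ℝ B] [CompleteSpace B]
    (hΛ : ∀ L' : ℝ, 1 ≤ L' →
      ∀ σ : ↥Λ → B →L[ℝ] B, σ 1 = 1 →
      (∀ l₁ l₂ : ↥Λ, σ (l₁ * l₂) = σ l₁ ∘L σ l₂) →
      (∀ l : ↥Λ, ‖σ l‖ ≤ L') →
      ∀ β : ↥Λ → B, (∀ l₁ l₂ : ↥Λ, β (l₁ * l₂) = β l₁ + σ l₁ (β l₂)) →
      ∃ M : ℝ, ∀ l : ↥Λ, ‖β l‖ ≤ M) :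
    ∀ L : ℝ, 1 ≤ L →
    ∀ π : G → B →L[ℝ] B, π 1 = 1 →
    (∀ g h : G, π (g * h) = π g ∘L π h) →
    (∀ g : G, ‖π g‖ ≤ L) →
    ∀ α : G → B, (∀ g h : G, α (g * h) = α g + π g (α h)) →
    Continuous (fun p : G × B => π p.1 p.2 + α p.1) →
    ∃ M : ℝ, ∀ g : G, ‖α g‖ ≤ M := by
  intro L hL π hπ1 hπmul hπbd α hα hcont
  have hL0 : (0:ℝ) < L := lt_of_lt_of_le one_pos hL
  -- α 1 = 0
  have hα1 : α 1 = 0 := by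
    have h := hα 1 1
    rw [one_mul, hπ1] at h
    simpa using h
  -- bound on Λ
  obtain ⟨M, hM⟩ := hΛ L hL (fun l : ↥Λ => π l)
    (by simpa using hπ1)
    (fun l₁ l₂ => by simpa using hπmul (l₁ : G) (l₂ : G))
    (fun l => hπbd l)
    (fun l : ↥Λ => α l)
    (fun l₁ l₂ => by simpa using hα (l₁ : G) (l₂ : G))
  have hM0 : 0 ≤ M := by
    have := hM 1
    simpa [hα1] using this
  -- continuity of α
  have hαcont : Continuous α := by
    have h := hcont.comp (continuous_id.prodMk continuous_const :
      Continuous fun g : G => (g, (0:B)))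
    have he : (fun g : G => π g 0 + α g) = α := funext fun g => by simp
    rw [← he]
    exact h
  have hπle : ∀ (g : G) (x : B), ‖π g x‖ ≤ L * ‖x‖ := fun g x =>
    ((π g).le_opNorm x).trans (mul_le_mul_of_nonneg_right (hπbd g) (norm_nonneg x))
  -- the sets
  set W : ℕ → Set G := fun n => {g : G | ‖α g‖ < n} with hW
  have hWopen : ∀ n, IsOpen (W n) :=
    fun n => isOpen_lt (continuous_norm.comp hαcont) continuous_const
  set V : ℕ → Set (G ⧸ Λ) := fun n => QuotientGroup.mk '' W n with hV
  have hVopen : ∀ n, IsOpen (V n) := fun n =>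
    QuotientGroup.isOpenMap_coe _ (hWopen n)
  have hVmeas : ∀ n, MeasurableSet (V n) := fun n => (hVopen n).measurableSet
  have hVunion : (⋃ n, V n) = Set.univ := by
    ext x
    simp only [Set.mem_iUnion, Set.mem_univ, iff_true]
    obtain ⟨h, rfl⟩ := QuotientGroup.mk_surjective x
    obtain ⟨n, hn⟩ := exists_nat_gt ‖α h‖
    exact ⟨n, h, hn, rfl⟩
  have hmono : Monotone V := by
    intro m n hmn
    refine Set.image_mono ?_
    intro g hg
    simp only [hW, Set.mem_setOf_eq] at hg ⊢
    exact hg.trans_le (Nat.cast_le.mpr hmn)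
  obtain ⟨n, hn⟩ : ∃ n, (1:ENNReal)/2 < ν (V n) := by
    have hs : ν (⋃ i, V i) = ⨆ i, ν (V i) :=
      hmono.directed_le.measure_iUnion
    rw [hVunion, measure_univ] at hs
    have hh : (1:ENNReal)/2 < ⨆ i, ν (V i) := by
      rw [← hs]
      exact ENNReal.half_lt_self one_ne_zero ENNReal.one_ne_top
    exact lt_iSup_iff.mp hh
  refine ⟨(n:ℝ) + L * ((n:ℝ) + L * M), fun g => ?_⟩
  -- translate and intersect
  have hsm : Measurable (fun x : G ⧸ Λ => g • x) := (continuous_const_smul g).measurable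
  have hpre : ν ((fun x : G ⧸ Λ => g • x) ⁻¹' V n) = ν (V n) := by
    have h2 := Measure.map_apply (μ := ν) hsm (hVmeas n)
    rw [hν g] at h2
    exact h2.symm
  have hne : (V n ∩ (fun x : G ⧸ Λ => g • x) ⁻¹' V n).Nonempty := by
    by_contra hcon
    rw [Set.not_nonempty_iff_eq_empty] at hcon
    have hd : Disjoint (V n) ((fun x : G ⧸ Λ => g • x) ⁻¹' V n) :=
      Set.disjoint_iff_inter_eq_empty.mpr hcon
    have hu := measure_union (μ := ν) hd (hsm (hVmeas n))
    have hle : ν (V n ∪ (fun x : G ⧸ Λ => g • x) ⁻¹' V n) ≤ 1 :=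
      (measure_mono (Set.subset_univ _)).trans_eq measure_univ
    rw [hu, hpre] at hle
    have : (1:ENNReal) < ν (V n) + ν (V n) := by
      calc (1:ENNReal) = 1/2 + 1/2 := by rw [ENNReal.add_halves]
      _ < ν (V n) + ν (V n) := ENNReal.add_lt_add hn hn
    exact absurd (this.trans_le hle) (lt_irrefl _)
  obtain ⟨x, hxV, hxP⟩ := hne
  obtain ⟨h, hh, hhx⟩ := hxV
  obtain ⟨k, hk, hkx⟩ := hxP
  -- k represents g • x = ⟦g * h⟧
  have hsmul : (g • x : G ⧸ Λ) = QuotientGroup.mk (g * h) := by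
    rw [← hhx]; rfl
  have hkgh : (QuotientGroup.mk (g*h) : G ⧸ Λ) = QuotientGroup.mk k := by
    rw [← hsmul, hkx]
  have hmem : (g*h)⁻¹ * k ∈ Λ := QuotientGroup.eq.mp hkgh
  set lam := (g*h)⁻¹ * k with hlam
  have hk_eq : k = g * (h * lam) := by
    rw [hlam, ← mul_assoc, mul_inv_cancel_left]
  have hlamM : ‖α lam‖ ≤ M := hM ⟨lam, hmem⟩
  have hαhl : ‖α (h * lam)‖ ≤ ‖α h‖ + L * M := by
    rw [hα h lam]
    refine (norm_add_le _ _).trans (add_le_add le_rfl ?_)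
    exact (hπle h _).trans (mul_le_mul_of_nonneg_left hlamM (le_of_lt hL0))
  have hαg : α g = α k - π g (α (h * lam)) := by
    rw [hk_eq, hα g (h * lam)]; abel
  have hkn : ‖α k‖ < (n:ℝ) := hk
  have hhn : ‖α h‖ < (n:ℝ) := hh
  calc ‖α g‖ = ‖α k - π g (α (h * lam))‖ := by rw [hαg]
    _ ≤ ‖α k‖ + ‖π g (α (h * lam))‖ := norm_sub_le _ _
    _ ≤ ‖α k‖ + L * ‖α (h * lam)‖ := add_le_add le_rfl (hπle g _)
    _ ≤ (n:ℝ) + L * ((n:ℝ) + L * M) := by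
        have h1 : ‖α (h * lam)‖ ≤ (n:ℝ) + L * M :=
          hαhl.trans (add_le_add (le_of_lt hhn) le_rfl)
        have h2 : L * ‖α (h * lam)‖ ≤ L * ((n:ℝ) + L * M) :=
          mul_le_mul_of_nonneg_left h1 (le_of_lt hL0)
        linarith
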